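/- For every ε₁ with 0 < ε₁ ≤ π/2 and every complex s with Re s > 0, the complex Gamma function satisfies |Γ(s)| ≤ (sin ε₁)^{−Re s} · Γ(Re s) · exp(−(π/2 − ε₁)·|Im s|), where Γ(Re s) denotes the real Gamma function evaluated at the positive real number Re s. -/

import Mathlib

open MeasureTheory Set Filter Complex

/-- Integrability of `t ^ w * exp (-a t)` on `(0, ∞)` for `Re w > -1`, `Re a > 0`. -/
lemma aux_integrable {a w : ℂ} (ha : 0 < a.re) (hw : -1 < w.re) :
    IntegrableOn (fun t : ℝ => (t : ℂ) ^ w * Complex.exp (-a * t)) (Ioi 0) := by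
  constructor
  · refine ContinuousOn.aestronglyMeasurable (ContinuousOn.mul ?_ ?_) measurableSet_Ioi
    · apply continuousOn_of_forall_continuousAt
      intro x hx
      exact (continuousAt_cpow_const <| ofReal_mem_slitPlane.2 hx).comp
        continuous_ofReal.continuousAt
    · exact (Complex.continuous_exp.comp
        (continuous_const.mul continuous_ofReal)).continuousOn
  · rw [← hasFiniteIntegral_norm_iff]
    have hbase : IntegrableOn (fun x : ℝ => x ^ w.re * Real.exp (-a.re * x ^ (1 : ℝ)))
        (Ioi 0) := integrableOn_rpow_mul_exp_neg_mul_rpow hw zero_lt_one ha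
    refine HasFiniteIntegral.congr hbase.2 ?_
    apply (ae_restrict_iff' measurableSet_Ioi).mpr
    filter_upwards with x hx
    rw [mem_Ioi] at hx
    rw [norm_mul,
      norm_cpow_eq_rpow_re_of_pos hx, Complex.norm_exp, Real.rpow_one]
    congr 2
    simp

/-- `∫_0^∞ t^{s-1} e^{-a t} dt = a^{-s} Γ(s)` for `Re a > 0`, `Re s > 0`. -/
lemma aux_key {s : ℂ} (hs : 0 < s.re) :
    ∀ {a : ℂ}, 0 < a.re →
      (∫ t : ℝ in Ioi 0, (t : ℂ) ^ (s - 1) * Complex.exp (-a * t))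
        = a ^ (-s) * Complex.Gamma s := by
  set U : Set ℂ := {z : ℂ | 0 < z.re} with hUdef
  have hsub : -1 < (s - 1).re := by simp [Complex.sub_re]; linarith
  have hU : IsOpen U := isOpen_lt continuous_const Complex.continuous_re
  set f : ℂ → ℂ := fun a => ∫ t : ℝ in Ioi 0, (t : ℂ) ^ (s - 1) * Complex.exp (-a * t)
    with hfdef
  set g : ℂ → ℂ := fun a => a ^ (-s) * Complex.Gamma s with hgdef
  have hfd : DifferentiableOn ℂ f U := by
    intro a₀ ha₀
    have ha₀' : 0 < a₀.re := ha₀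
    refine DifferentiableAt.differentiableWithinAt ?_
    set F' : ℂ → ℝ → ℂ := fun a t => -(t : ℂ) * ((t : ℂ) ^ (s - 1) * Complex.exp (-a * t))
      with hF'def
    have key := hasDerivAt_integral_of_dominated_loc_of_deriv_le
      (F := fun a (t : ℝ) => (t : ℂ) ^ (s - 1) * Complex.exp (-a * t)) (F' := F')
      (x₀ := a₀) (s := Metric.ball a₀ (a₀.re / 2))
      (bound := fun t : ℝ => t ^ s.re * Real.exp (-(a₀.re / 2) * t))
      (μ := volume.restrict (Ioi 0)) (Metric.ball_mem_nhds _ (by positivity))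
      ?_ ?_ ?_ ?_ ?_ ?_
    · exact key.2.differentiableAt
    · -- measurability of F a for a near a₀
      filter_upwards [hU.mem_nhds ha₀] with a ha
      exact (aux_integrable ha hsub).aestronglyMeasurable
    · exact aux_integrable ha₀' hsub
    · exact (continuous_ofReal.neg.aestronglyMeasurable.restrict).mul
        (aux_integrable ha₀' hsub).aestronglyMeasurable
    · -- bound
      apply (ae_restrict_iff' measurableSet_Ioi).mpr
      filter_upwards with t ht
      rw [mem_Ioi] at ht
      intro a ha
      have hare : a₀.re / 2 ≤ a.re := by
        have := abs_re_le_norm (a - a₀)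
        rw [Metric.mem_ball, Complex.dist_eq] at ha
        have h2 := abs_le.1 (this.trans ha.le)
        simp only [Complex.sub_re] at h2
        linarith [h2.1]
      have : ‖F' a t‖ = t ^ s.re * Real.exp (-a.re * t) := by
        rw [hF'def]
        simp only [norm_mul, norm_neg, Complex.norm_of_nonneg ht.le,
          abs_of_pos ht, norm_cpow_eq_rpow_re_of_pos ht, Complex.norm_exp]
        rw [show (-a * (t : ℂ)).re = -a.re * t by simp, Complex.sub_re, Complex.one_re,
          show s.re = 1 + (s.re - 1) by ring, Real.rpow_add ht, Real.rpow_one]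
        ring_nf
      rw [this]
      gcongr t ^ s.re * Real.exp ?_
      nlinarith
    · -- integrability of bound
      have := integrableOn_rpow_mul_exp_neg_mul_rpow
        (show (-1 : ℝ) < s.re by linarith) (show (0 : ℝ) < 1 by norm_num) (show 0 < a₀.re / 2 by positivity)
      refine this.congr_fun (fun x hx => ?_) measurableSet_Ioi
      simp only [Real.rpow_one]
    · -- HasDerivAt
      apply Eventually.of_forall
      intro t a _
      have h1 : HasDerivAt (fun a : ℂ => -a * t) (-1 * t) a :=
        (hasDerivAt_id a).neg.mul_const _
      have h2 := (h1.cexp).const_mul ((t : ℂ) ^ (s - 1))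
      refine h2.congr_deriv ?_
      rw [hF'def]
      ring
  have hga : AnalyticOnNhd ℂ g U := by
    apply DifferentiableOn.analyticOnNhd _ hU
    intro a ha
    exact (((differentiableAt_id.cpow (differentiableAt_const (-s))
      (Or.inl ha)).mul_const (Complex.Gamma s))).differentiableWithinAt
  have hfa : AnalyticOnNhd ℂ f U := hfd.analyticOnNhd hU
  have hpre : IsPreconnected U := (convex_halfSpace_re_gt 0).isPreconnected
  have h1U : (1 : ℂ) ∈ U := by simp [hUdef]
  have hreal : ∀ r : ℝ, 0 < r → f r = g r := by
    intro r hr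
    have := Complex.integral_cpow_mul_exp_neg_mul_Ioi hs hr
    rw [hfdef, hgdef]
    simp only
    rw [show (∫ t : ℝ in Ioi 0, (t : ℂ) ^ (s - 1) * Complex.exp (-(r : ℂ) * t))
        = ∫ t : ℝ in Ioi 0, (t : ℂ) ^ (s - 1) * Complex.exp (-((r : ℂ) * t)) by
      congr 1; ext t; rw [neg_mul]]
    rw [this]
    congr 1
    rw [one_div, Complex.inv_cpow, ← Complex.cpow_neg]
    rw [Complex.arg_ofReal_of_nonneg hr.le]
    exact Real.pi_ne_zero.symm
  have hfreq : ∃ᶠ z in nhdsWithin (1 : ℂ) {(1 : ℂ)}ᶜ, f z = g z := by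
    have hseq : Tendsto (fun n : ℕ => ((1 + ((n : ℝ) + 1)⁻¹ : ℝ) : ℂ)) atTop
        (nhdsWithin (1 : ℂ) {(1 : ℂ)}ᶜ) := by
      apply tendsto_nhdsWithin_of_tendsto_nhds_of_eventually_within
      · have h0 : Tendsto (fun n : ℕ => (1 + ((n : ℝ) + 1)⁻¹ : ℝ)) atTop (nhds 1) := by
          have h1 := (tendsto_const_nhds (x := (1 : ℝ)) (f := atTop (α := ℕ))).add
            (by simpa [one_div] using tendsto_one_div_add_atTop_nhds_zero_nat)
          simpa using h1
        simpa [Function.comp_def] using (Complex.continuous_ofReal.tendsto 1).comp h0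
      · apply Eventually.of_forall
        intro n
        simp only [mem_compl_iff, mem_singleton_iff]
        intro h
        have : (1 + ((n : ℝ) + 1)⁻¹ : ℝ) = 1 := by exact_mod_cast h
        have : ((n : ℝ) + 1)⁻¹ = 0 := by linarith
        exact (by positivity : ((n : ℝ) + 1)⁻¹ ≠ 0) this
    refine hseq.frequently (Frequently.of_forall fun n => ?_)
    exact hreal _ (by positivity)
  have heqon : EqOn f g U :=
    hfa.eqOn_of_preconnected_of_frequently_eq hga hpre h1U hfreq
  intro a ha
  exact heqon ha

theorem abs_complexGamma_le (ε₁ : ℝ) (hε₁ : 0 < ε₁) (hε₂ : ε₁ ≤ Real.pi / 2)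
    (s : ℂ) (hs : 0 < s.re) :
    ‖Complex.Gamma s‖ ≤
      Real.sin ε₁ ^ (-s.re) * Real.Gamma s.re *
        Real.exp (-(Real.pi / 2 - ε₁) * |s.im|) := by
  set θ : ℝ := Real.pi / 2 - ε₁ with hθdef
  have hθ0 : 0 ≤ θ := by simp [hθdef]; linarith
  have hθlt : θ < Real.pi / 2 := by simp [hθdef]; linarith
  set φ : ℝ := if 0 ≤ s.im then θ else -θ with hφdef
  have hφabs : |φ| ≤ θ := by
    rw [hφdef]; split <;> simp [_root_.abs_of_nonneg hθ0, abs_neg, le_of_eq]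
  have hφlt : |φ| < Real.pi / 2 := lt_of_le_of_lt hφabs hθlt
  set a : ℂ := Real.cos φ + Real.sin φ * Complex.I with hadef
  have hcos : Real.cos φ = Real.sin ε₁ := by
    rw [hφdef]
    split
    · rw [hθdef, Real.cos_pi_div_two_sub]
    · rw [Real.cos_neg, hθdef, Real.cos_pi_div_two_sub]
  have hsin_pos : 0 < Real.sin ε₁ :=
    Real.sin_pos_of_pos_of_lt_pi hε₁ (lt_of_le_of_lt hε₂ (by linarith [Real.pi_pos]))
  have hare : a.re = Real.sin ε₁ := by
    rw [hadef, ← hcos]; simp [Complex.cos_ofReal_re]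
  have ha_pos : 0 < a.re := by rw [hare]; exact hsin_pos
  have habs : ‖a‖ = 1 := by
    rw [hadef, Complex.ofReal_cos, Complex.ofReal_sin]
    exact Complex.norm_cos_add_sin_mul_I φ
  have ha_ne : a ≠ 0 := by
    intro h; rw [h] at habs; simp at habs
  have harg : Complex.arg a = φ := by
    rw [hadef, Complex.ofReal_cos, Complex.ofReal_sin]
    have hb := abs_le.1 hφlt.le
    exact Complex.arg_cos_add_sin_mul_I ⟨by linarith [Real.pi_pos], by linarith [Real.pi_pos]⟩
  have hkey := aux_key hs ha_pos
  -- Γ s = a ^ s * integral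
  have hGamma : Complex.Gamma s = a ^ s *
      ∫ t : ℝ in Ioi 0, (t : ℂ) ^ (s - 1) * Complex.exp (-a * t) := by
    rw [hkey, ← mul_assoc, ← Complex.cpow_add _ _ ha_ne]
    simp
  -- norm of a ^ s
  have hcpow : ‖a ^ s‖ = Real.exp (-(θ * |s.im|)) := by
    rw [Complex.norm_cpow_of_ne_zero ha_ne, habs, harg, Real.one_rpow]
    rw [show φ * s.im = θ * |s.im| by
      rw [hφdef]; rcases le_or_gt 0 s.im with h | h
      · rw [if_pos h, _root_.abs_of_nonneg h]
      · rw [if_neg (not_le.2 h), _root_.abs_of_neg h]; ring]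
    rw [Real.exp_neg, one_div]
  -- bound on the integral
  have hnorm_int : ‖∫ t : ℝ in Ioi 0, (t : ℂ) ^ (s - 1) * Complex.exp (-a * t)‖
      ≤ ∫ t : ℝ in Ioi 0, t ^ (s.re - 1) * Real.exp (-Real.sin ε₁ * t) := by
    refine (norm_integral_le_integral_norm _).trans_eq ?_
    apply setIntegral_congr_fun measurableSet_Ioi
    intro t ht
    rw [mem_Ioi] at ht
    simp only [norm_mul]
    rw [Complex.norm_cpow_eq_rpow_re_of_pos ht, Complex.norm_exp,
      show (-a * (t : ℂ)).re = -Real.sin ε₁ * t by rw [← hare]; simp,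
      Complex.sub_re, Complex.one_re]
  -- evaluate the real integral
  have hreal_int : (∫ t : ℝ in Ioi 0, t ^ (s.re - 1) * Real.exp (-Real.sin ε₁ * t))
      = Real.sin ε₁ ^ (-s.re) * Real.Gamma s.re := by
    have h2 := Real.integral_rpow_mul_exp_neg_mul_Ioi hs hsin_pos
    rw [show (∫ t : ℝ in Ioi 0, t ^ (s.re - 1) * Real.exp (-Real.sin ε₁ * t))
        = ∫ t : ℝ in Ioi 0, t ^ (s.re - 1) * Real.exp (-(Real.sin ε₁ * t)) by
      congr 1; ext t; rw [neg_mul]]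
    rw [h2, one_div, Real.inv_rpow hsin_pos.le, ← Real.rpow_neg hsin_pos.le]
  calc ‖Complex.Gamma s‖
      = ‖a ^ s‖ *
        ‖∫ t : ℝ in Ioi 0, (t : ℂ) ^ (s - 1) * Complex.exp (-a * t)‖ := by
        rw [hGamma, norm_mul]
    _ ≤ Real.exp (-(θ * |s.im|)) *
        (Real.sin ε₁ ^ (-s.re) * Real.Gamma s.re) := by
        rw [hcpow]
        gcongr
        exact hnorm_int.trans_eq hreal_int
    _ = Real.sin ε₁ ^ (-s.re) * Real.Gamma s.re *
        Real.exp (-(Real.pi / 2 - ε₁) * |s.im|) := by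
        rw [hθdef]; ring_nf
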